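/- If a geodesic α in a CAT(0) space is δ-slim (i.e., for all x ∈ X and y ∈ α, d(π_α(x), [x,y]) < δ), then α is 6δ-contracting: any metric ball not intersecting α projects onto α to a set of diameter at most 6δ. -/

import Mathlib

open Set Metric Topology
open scoped ENNReal

/-- A geodesic parameterized by arc length on a subset of `ℝ`. -/
def IsGeodesicOn {X : Type*} [MetricSpace X] (γ : ℝ → X) (I : Set ℝ) : Prop :=
  ∀ ⦃s⦄, s ∈ I → ∀ ⦃t⦄, t ∈ I → dist (γ s) (γ t) = |s - t|

/-- A geodesic metric space: any two points are joined by a geodesic. -/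
class GeodesicSpace (X : Type*) [MetricSpace X] : Prop where
  geodesic : ∀ x y : X, ∃ γ : ℝ → X, γ 0 = x ∧ γ (dist x y) = y ∧
    IsGeodesicOn γ (Set.Icc 0 (dist x y))

/-- A CAT(0) space: a geodesic metric space satisfying the CN (Bruhat–Tits) inequality. -/
class CAT0Space (X : Type*) [MetricSpace X] extends GeodesicSpace X : Prop where
  cn : ∀ x y z m : X, dist y m = dist y z / 2 → dist z m = dist y z / 2 →
    dist x m ^ 2 ≤ (dist x y ^ 2 + dist x z ^ 2) / 2 - dist y z ^ 2 / 4

/-- A `(K,L)`-quasi-geodesic on a subset of `ℝ`. -/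
def IsQuasiGeodesicOn {X : Type*} [MetricSpace X] (K L : ℝ) (γ : ℝ → X) (I : Set ℝ) : Prop :=
  ∀ s ∈ I, ∀ t ∈ I,
    |s - t| / K - L ≤ dist (γ s) (γ t) ∧ dist (γ s) (γ t) ≤ K * |s - t| + L

/-- The set `A` (e.g. the image of a (quasi-)geodesic) is Morse with gauge `M`:
every `(K,L)`-quasi-geodesic with endpoints on `A` stays in the `M K L`-neighborhood of `A`. -/
def IsMorseWith {X : Type*} [MetricSpace X] (M : ℝ → ℝ → ℝ) (A : Set X) : Prop :=
  ∀ K L : ℝ, 1 ≤ K → 0 ≤ L → ∀ (σ : ℝ → X) (a b : ℝ), a ≤ b →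
    IsQuasiGeodesicOn K L σ (Set.Icc a b) → σ a ∈ A → σ b ∈ A →
    ∀ t ∈ Set.Icc a b, Metric.infDist (σ t) A ≤ M K L

/-- `π` is a nearest-point projection onto `A`. -/
def IsProjOn {X : Type*} [MetricSpace X] (π : X → X) (A : Set X) : Prop :=
  ∀ x : X, π x ∈ A ∧ ∀ a ∈ A, dist x (π x) ≤ dist x a

/-- `A` is `D`-contracting with respect to the nearest-point projection `π`. -/
def IsContractingWith {X : Type*} [MetricSpace X] (D : ℝ) (π : X → X) (A : Set X) : Prop :=
  IsProjOn π A ∧ ∀ x y : X, dist x y < dist x (π x) → dist (π x) (π y) < D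

/-- The Hausdorff distance between `A` and `B` is at most `C`. -/
def HausdorffLE {X : Type*} [MetricSpace X] (A B : Set X) (C : ℝ) : Prop :=
  (∀ a ∈ A, ∃ b ∈ B, dist a b ≤ C) ∧ ∀ b ∈ B, ∃ a ∈ A, dist a b ≤ C

/-- A `(lam, eps)`-quasi-isometric embedding. -/
def IsQIEmbedding {X Y : Type*} [MetricSpace X] [MetricSpace Y]
    (lam eps : ℝ) (f : X → Y) : Prop :=
  ∀ s t : X, dist s t / lam - eps ≤ dist (f s) (f t) ∧ dist (f s) (f t) ≤ lam * dist s t + eps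

/-- A `(lam, eps)`-quasi-isometry: a quasi-isometric embedding with `eps`-dense image. -/
def IsQuasiIsometry {X Y : Type*} [MetricSpace X] [MetricSpace Y]
    (lam eps : ℝ) (f : X → Y) : Prop :=
  IsQIEmbedding lam eps f ∧ ∀ y : Y, ∃ x : X, dist (f x) y ≤ eps

/-- Slimness (thin triangle condition (i)) for the set `A` with projection `π`:
for every `x` and every `y ∈ A`, the projection `π x` is within `δ` of the geodesic `[x,y]`. -/
def SlimWith {X : Type*} [MetricSpace X] (δ : ℝ) (π : X → X) (A : Set X) : Prop :=
  ∀ x : X, ∀ y ∈ A, ∀ σ : ℝ → X, σ 0 = x → σ (dist x y) = y →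
    IsGeodesicOn σ (Set.Icc 0 (dist x y)) →
    Metric.infDist (π x) (σ '' Set.Icc 0 (dist x y)) < δ

/-- The lower divergence of `γ` (defined on `I ⊆ ℝ`) at scale `r`: the infimum over `t > r`
of the infimum of lengths of paths from `γ (t-r)` to `γ (t+r)` that avoid the open
`r`-ball about `γ t`. -/
noncomputable def ldiv {X : Type*} [MetricSpace X] (γ : ℝ → X) (I : Set ℝ) (r : ℝ) : ℝ≥0∞ :=
  ⨅ (t : ℝ) (_ : r < t) (_ : Set.Icc (t - r) (t + r) ⊆ I)
    (p : ℝ → X) (a : ℝ) (b : ℝ) (_ : a ≤ b) (_ : p a = γ (t - r)) (_ : p b = γ (t + r))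
    (_ : ∀ s ∈ Set.Icc a b, r ≤ dist (p s) (γ t)),
    eVariationOn p (Set.Icc a b)

/-- The direct limit topology on the union of an increasing family of subspaces. -/
def dirLimTop {R : Type*} [TopologicalSpace R] (S : ℕ → Set R) :
    TopologicalSpace ↥(⋃ n, S n) :=
  ⨆ n, TopologicalSpace.coinduced (Set.inclusion (Set.subset_iUnion S n)) inferInstance


/-- In a CAT(0) space, the distance from a point to a geodesic is quasiconvex:
it is bounded by its values at the endpoints. -/
lemma dist_geodesic_le_max {X : Type*} [MetricSpace X] [CAT0Space X]
    (τ : ℝ → X) (L : ℝ) (hL : 0 ≤ L) (hτ : IsGeodesicOn τ (Set.Icc 0 L))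
    (x : X) {u : ℝ} (hu : u ∈ Set.Icc 0 L) :
    dist x (τ u) ≤ max (dist x (τ 0)) (dist x (τ L)) := by
  have h0 : (0:ℝ) ∈ Set.Icc 0 L := ⟨le_refl 0, hL⟩
  have hLm : L ∈ Set.Icc 0 L := ⟨hL, le_refl L⟩
  have hlip : LipschitzOnWith 1 (fun t => dist x (τ t)) (Set.Icc 0 L) := by
    intro s hs t ht
    have h1 : |dist x (τ s) - dist x (τ t)| ≤ dist (τ s) (τ t) := by
      rw [dist_comm x (τ s), dist_comm x (τ t)]
      exact abs_dist_sub_le _ _ _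
    have h2 : dist (τ s) (τ t) = |s - t| := hτ hs ht
    have : (dist (dist x (τ s)) (dist x (τ t)) : ℝ) ≤ dist s t := by
      rw [Real.dist_eq, Real.dist_eq]; rw [h2] at h1; exact h1
    simpa [edist_dist] using this
  have hcont : ContinuousOn (fun t => dist x (τ t)) (Set.Icc 0 L) := hlip.continuousOn
  obtain ⟨w, hw, hmax⟩ := isCompact_Icc.exists_isMaxOn ⟨0, h0⟩ hcont
  have hwle : dist x (τ w) ≤ max (dist x (τ 0)) (dist x (τ L)) := by
    by_contra hcon
    push_neg at hcon
    have hw0 : w ≠ 0 := by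
      intro h; rw [h] at hcon; exact absurd (le_max_left _ _) (not_le.2 hcon)
    have hwL : w ≠ L := by
      intro h; rw [h] at hcon; exact absurd (le_max_right _ _) (not_le.2 hcon)
    have hw1 : 0 < w := lt_of_le_of_ne hw.1 (Ne.symm hw0)
    have hw2 : w < L := lt_of_le_of_ne hw.2 hwL
    set h : ℝ := min w (L - w) with hh
    have hpos : 0 < h := lt_min hw1 (by linarith)
    have hm1 : w - h ∈ Set.Icc 0 L := by
      constructor
      · have : h ≤ w := min_le_left _ _
        linarith
      · linarith
    have hm2 : w + h ∈ Set.Icc 0 L := by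
      constructor
      · linarith
      · have : h ≤ L - w := min_le_right _ _
        linarith
    have hd12 : dist (τ (w - h)) (τ (w + h)) = 2 * h := by
      rw [hτ hm1 hm2]
      rw [abs_of_nonpos (by linarith)]
      ring
    have hd1m : dist (τ (w - h)) (τ w) = dist (τ (w - h)) (τ (w + h)) / 2 := by
      rw [hτ hm1 hw, hd12, abs_of_nonpos (by linarith)]
      ring
    have hd2m : dist (τ (w + h)) (τ w) = dist (τ (w - h)) (τ (w + h)) / 2 := by
      rw [hτ hm2 hw, hd12, abs_of_nonneg (by linarith)]
      ring
    have hcn := CAT0Space.cn x (τ (w - h)) (τ (w + h)) (τ w) hd1m hd2m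
    rw [hd12] at hcn
    have hb1 : dist x (τ (w - h)) ≤ dist x (τ w) := hmax hm1
    have hb2 : dist x (τ (w + h)) ≤ dist x (τ w) := hmax hm2
    have hn1 : (0:ℝ) ≤ dist x (τ (w - h)) := dist_nonneg
    have hn2 : (0:ℝ) ≤ dist x (τ (w + h)) := dist_nonneg
    nlinarith [sq_nonneg h, sq_nonneg (dist x (τ w))]
  exact le_trans (hmax hu) hwle

/-- Key step: if a ball about `x` misses the geodesic, the projection of any point of the
ball is `3δ`-close to the projection of the center. -/
lemma proj_center_close {X : Type*} [MetricSpace X] [CAT0Space X]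
    (γ : ℝ → X) (I : Set ℝ)
    (π : X → X) (hπ : IsProjOn π (γ '' I))
    (δ : ℝ) (hslim : SlimWith δ π (γ '' I))
    (x : X) (r : ℝ) (hball : Metric.ball x r ∩ (γ '' I) = ∅)
    (y : X) (hy : y ∈ Metric.ball x r) :
    dist (π x) (π y) ≤ 3 * δ := by
  have hπx : π x ∈ γ '' I := (hπ x).1
  have hπy : π y ∈ γ '' I := (hπ y).1
  have hA : ∀ g ∈ γ '' I, r ≤ dist x g := by
    intro g hg
    by_contra hlt
    push_neg at hlt
    have : g ∈ Metric.ball x r ∩ (γ '' I) := ⟨Metric.mem_ball'.2 hlt, hg⟩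
    rw [hball] at this
    exact this
  have hra : r ≤ dist x (π x) := hA _ hπx
  have he : dist x y < r := Metric.mem_ball'.1 hy
  -- Step 1: slimness at x along the geodesic from x to π y
  obtain ⟨σ, hσ0, hσL, hσg⟩ := GeodesicSpace.geodesic x (π y)
  have hL1 : (0:ℝ) ≤ dist x (π y) := dist_nonneg
  have hs := hslim x (π y) hπy σ hσ0 hσL hσg
  have hne : (σ '' Set.Icc 0 (dist x (π y))).Nonempty :=
    ⟨σ 0, Set.mem_image_of_mem σ ⟨le_refl 0, hL1⟩⟩
  rw [Metric.infDist_lt_iff hne] at hs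
  obtain ⟨q, hqmem, hq⟩ := hs
  obtain ⟨s, hsmem, rfl⟩ := hqmem
  have d1 : dist x (σ s) = s := by
    have := hσg (⟨le_refl 0, hL1⟩ : (0:ℝ) ∈ Set.Icc 0 (dist x (π y))) hsmem
    rw [hσ0] at this
    rw [this, abs_of_nonpos (by linarith [hsmem.1])]
    ring
  have d2 : dist (σ s) (π y) = dist x (π y) - s := by
    have := hσg hsmem (⟨hL1, le_refl _⟩ : dist x (π y) ∈ Set.Icc 0 (dist x (π y)))
    rw [hσL] at this
    rw [this, abs_of_nonpos (by linarith [hsmem.2])]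
    ring
  -- from q = σ s near π x:
  have key1 : dist x (π x) + dist (π x) (π y) - 2 * δ < dist x (π y) := by
    have t1 : dist x (π x) ≤ dist x (σ s) + dist (σ s) (π x) := dist_triangle4 x (σ s) (σ s) (π x) |>.trans (by simp)
    have t2 : dist (π x) (π y) ≤ dist (π x) (σ s) + dist (σ s) (π y) := dist_triangle _ _ _
    rw [d1] at t1
    rw [d2] at t2
    have hq' : dist (σ s) (π x) < δ := by rw [dist_comm]; exact hq
    have hq'' : dist (π x) (σ s) < δ := hq
    linarith
  -- Step 2: slimness at y along the geodesic from y to π x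
  obtain ⟨τ, hτ0, hτL, hτg⟩ := GeodesicSpace.geodesic y (π x)
  have hL2 : (0:ℝ) ≤ dist y (π x) := dist_nonneg
  have hs2 := hslim y (π x) hπx τ hτ0 hτL hτg
  have hne2 : (τ '' Set.Icc 0 (dist y (π x))).Nonempty :=
    ⟨τ 0, Set.mem_image_of_mem τ ⟨le_refl 0, hL2⟩⟩
  rw [Metric.infDist_lt_iff hne2] at hs2
  obtain ⟨p, hpmem, hp⟩ := hs2
  obtain ⟨u, humem, rfl⟩ := hpmem
  -- lower bound on dist x (τ u)
  have low : dist x (π y) - δ < dist x (τ u) := by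
    have t3 : dist x (π y) ≤ dist x (τ u) + dist (τ u) (π y) := dist_triangle _ _ _
    have hp' : dist (τ u) (π y) < δ := by rw [dist_comm]; exact hp
    linarith
  -- upper bound from quasiconvexity
  have up : dist x (τ u) ≤ max (dist x (τ 0)) (dist x (τ (dist y (π x)))) :=
    dist_geodesic_le_max τ (dist y (π x)) hL2 hτg x humem
  rw [hτ0, hτL] at up
  have up' : dist x (τ u) ≤ dist x (π x) := by
    rcases max_cases (dist x y) (dist x (π x)) with ⟨heq, _⟩ | ⟨heq, _⟩
    · rw [heq] at up; linarith
    · rw [heq] at up; exact up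
  linarith

/-- a `δ`-slim geodesic in a CAT(0) space is `6δ`-contracting: any metric ball
disjoint from the geodesic projects onto it with diameter at most `6δ`. -/
theorem stmt8 {X : Type*} [MetricSpace X] [CAT0Space X]
    (γ : ℝ → X) (I : Set ℝ) (hγ : IsGeodesicOn γ I)
    (π : X → X) (hπ : IsProjOn π (γ '' I))
    (δ : ℝ) (hslim : SlimWith δ π (γ '' I)) :
    ∀ (x : X) (r : ℝ), Metric.ball x r ∩ (γ '' I) = ∅ →
      ∀ y ∈ Metric.ball x r, ∀ z ∈ Metric.ball x r, dist (π y) (π z) ≤ 6 * δ := by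
  intro x r hball y hy z hz
  have h1 : dist (π x) (π y) ≤ 3 * δ := proj_center_close γ I π hπ δ hslim x r hball y hy
  have h2 : dist (π x) (π z) ≤ 3 * δ := proj_center_close γ I π hπ δ hslim x r hball z hz
  have t : dist (π y) (π z) ≤ dist (π y) (π x) + dist (π x) (π z) := dist_triangle _ _ _
  rw [dist_comm (π y) (π x)] at t
  linarith
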